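/- Let x_1, …, x_n ∈ ℝ^p and suppose P = conv{x_1, …, x_n} is full-dimensional with exactly k extreme points h_1, …, h_k, whose normal cones have solid angles ω_i = ω(N_P(h_i)) satisfying 0 < ω_i < 1/2 for every i. Let g_1, …, g_m be i.i.d. standard Gaussian vectors in ℝ^p and let δ ∈ (0,1). If m > κ̄ k log(k/δ) where κ̄ = 1/(k · log(1/max_i(1 − 2ω_i))), then with probability at least 1 − δ, for every i ∈ {1,…,k} there exists j ∈ {1,…,m} with g_j ∈ N_P(h_i) ∪ (−N_P(h_i)). -/

import Mathlib

open MeasureTheory ProbabilityTheory Metric Set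
open scoped Pointwise

/-- The standard Gaussian measure `N(0, I_p)` on `ℝ^p`. -/
noncomputable def stdGaussian (p : ℕ) : Measure (EuclideanSpace ℝ (Fin p)) :=
  (Measure.pi fun _ : Fin p => gaussianReal 0 1).map
    (MeasurableEquiv.toLp 2 (Fin p → ℝ))

/-- The solid angle of a cone `K ⊆ ℝ^p`: its standard Gaussian measure. -/
noncomputable def solidAngle {p : ℕ} (K : Set (EuclideanSpace ℝ (Fin p))) : ℝ :=
  (stdGaussian p K).toReal

/-- The normal cone of a convex set `C` at a point `x`. -/
def normalCone {p : ℕ} (C : Set (EuclideanSpace ℝ (Fin p))) (x : EuclideanSpace ℝ (Fin p)) :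
    Set (EuclideanSpace ℝ (Fin p)) :=
  {w | ∀ y ∈ C, (inner ℝ w (y - x) : ℝ) ≤ 0}

lemma stdGaussian_isProb (p : ℕ) : IsProbabilityMeasure (stdGaussian p) :=
  Measure.isProbabilityMeasure_map (MeasurableEquiv.measurable _).aemeasurable

lemma gaussianReal_neg_pres :
    MeasurePreserving (fun x : ℝ => -x) (gaussianReal 0 1) (gaussianReal 0 1) := by
  refine ⟨measurable_neg, ?_⟩
  have := gaussianReal_map_const_mul (μ := 0) (v := 1) (-1)
  have h2 : (fun x : ℝ => -x) = (fun x : ℝ => (-1 : ℝ) * x) := by funext x; ring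
  rw [h2, this]
  norm_num

lemma stdGaussian_map_neg (p : ℕ) :
    (stdGaussian p).map (fun x => -x) = stdGaussian p := by
  unfold _root_.stdGaussian
  have hpi : MeasurePreserving (fun (a : Fin p → ℝ) i => -(a i))
      (Measure.pi fun _ => gaussianReal 0 1) (Measure.pi fun _ => gaussianReal 0 1) :=
    measurePreserving_pi _ _ (fun _ => gaussianReal_neg_pres)
  rw [Measure.map_map (by exact measurable_neg) (MeasurableEquiv.measurable _)]
  have hcomm : ((fun x : EuclideanSpace ℝ (Fin p) => -x) ∘
      (MeasurableEquiv.toLp 2 (Fin p → ℝ))) =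
      ((MeasurableEquiv.toLp 2 (Fin p → ℝ)) ∘ (fun (a : Fin p → ℝ) i => -(a i))) := rfl
  rw [hcomm, ← Measure.map_map (MeasurableEquiv.measurable _) hpi.measurable, hpi.map_eq]

lemma isClosed_normalCone {p : ℕ} (C : Set (EuclideanSpace ℝ (Fin p)))
    (x : EuclideanSpace ℝ (Fin p)) : IsClosed (normalCone C x) := by
  have : normalCone C x = ⋂ y ∈ C, {w : EuclideanSpace ℝ (Fin p) | (inner ℝ w (y - x) : ℝ) ≤ 0} := by
    ext w; simp [normalCone]
  rw [this]
  exact isClosed_biInter fun y _ =>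
    isClosed_le (continuous_id.inner continuous_const) continuous_const

lemma stdGaussian_singleton {p : ℕ} (hp : 0 < p) (a : EuclideanSpace ℝ (Fin p)) :
    stdGaussian p {a} = 0 := by
  unfold _root_.stdGaussian
  rw [MeasurableEquiv.map_apply]
  have hpre : (MeasurableEquiv.toLp 2 (Fin p → ℝ)) ⁻¹' {a}
      = {(MeasurableEquiv.toLp 2 (Fin p → ℝ)).symm a} := by
    rw [← MeasurableEquiv.image_symm, Set.image_singleton]
  rw [hpre, ← Set.univ_pi_singleton, Measure.pi_pi]
  have hz : ∀ i : Fin p, gaussianReal 0 1 {(MeasurableEquiv.toLp 2 (Fin p → ℝ)).symm a i} = 0 :=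
    fun i => gaussianReal_absolutelyContinuous 0 one_ne_zero (Real.volume_singleton)
  rw [Finset.prod_eq_zero (Finset.mem_univ ⟨0, hp⟩) (hz _)]

lemma stdGaussian_neg_set {p : ℕ} {N : Set (EuclideanSpace ℝ (Fin p))} (hN : MeasurableSet N) :
    stdGaussian p (-N) = stdGaussian p N := by
  have hs : (-N : Set (EuclideanSpace ℝ (Fin p))) = (fun x => -x) ⁻¹' N := by
    ext y; simp [Set.mem_neg]
  rw [hs, ← Measure.map_apply measurable_neg hN, stdGaussian_map_neg]

/-- Corollary 1: if `m > κ̄ k log(k/δ)` with `κ̄ = 1/(k log(1/max_i (1 - 2ω_i)))`, then the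
proto-algorithm finds all `k` extreme points with probability at least `1 - δ`. -/
theorem proto_algorithm_exact_recovery_normalized
    (p n k m : ℕ) (x : Fin n → EuclideanSpace ℝ (Fin p))
    (P : Set (EuclideanSpace ℝ (Fin p))) (hP : P = convexHull ℝ (Set.range x))
    (hfull : (interior P).Nonempty)
    (h : Fin k → EuclideanSpace ℝ (Fin p)) (hinj : Function.Injective h)
    (hext : Set.range h = Set.extremePoints ℝ P)
    (ω : Fin k → ℝ) (hω : ∀ i, ω i = solidAngle (normalCone P (h i)))
    (hωpos : ∀ i, 0 < ω i) (hωlt : ∀ i, ω i < 1 / 2)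
    (δ : ℝ) (hδ : δ ∈ Set.Ioo (0 : ℝ) 1)
    (κbar : ℝ) (hκbar : κbar = 1 / (k * Real.log (1 / (⨆ i, 1 - 2 * ω i))))
    (hm : (m : ℝ) > κbar * k * Real.log (k / δ)) :
    1 - δ ≤ ((Measure.pi fun _ : Fin m => stdGaussian p)
      {g | ∀ i : Fin k, ∃ j : Fin m,
        g j ∈ normalCone P (h i) ∪ -normalCone P (h i)}).toReal := by
  haveI := stdGaussian_isProb p
  haveI : IsProbabilityMeasure (Measure.pi fun _ : Fin m => stdGaussian p) := inferInstance
  set Pm := Measure.pi fun _ : Fin m => stdGaussian p with hPm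
  rcases Nat.eq_zero_or_pos k with hk0 | hkpos
  · subst hk0
    have hE : {g : Fin m → EuclideanSpace ℝ (Fin p) | ∀ i : Fin 0, ∃ j : Fin m,
        g j ∈ normalCone P (h i) ∪ -normalCone P (h i)} = Set.univ :=
      Set.eq_univ_of_forall (fun g i => i.elim0)
    rw [hE, measure_univ, ENNReal.toReal_one]
    linarith [hδ.1]
  haveI : Nonempty (Fin k) := ⟨⟨0, hkpos⟩⟩
  -- p must be positive
  have hp : 0 < p := by
    rcases Nat.eq_zero_or_pos p with hp0 | hp
    · exfalso
      subst hp0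
      set i0 : Fin k := ⟨0, hkpos⟩
      have hN : normalCone P (h i0) = Set.univ := by
        ext w
        simp only [normalCone, Set.mem_setOf_eq, Set.mem_univ, iff_true]
        intro y _
        have hy : y - h i0 = 0 := Subsingleton.elim _ _
        rw [hy, inner_zero_right]
      have hω1 : ω i0 = 1 := by
        rw [hω, hN]
        simp [solidAngle]
      have := hωlt i0
      rw [hω1] at this
      linarith
    · exact hp
  -- notation
  set μ := stdGaussian p with hμ
  set N : Fin k → Set (EuclideanSpace ℝ (Fin p)) := fun i => normalCone P (h i) with hNdef
  have hNmeas : ∀ i, MeasurableSet (N i) := fun i => (isClosed_normalCone _ _).measurableSet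
  set S : Fin k → Set (EuclideanSpace ℝ (Fin p)) := fun i => N i ∪ -N i with hSdef
  have hSmeas : ∀ i, MeasurableSet (S i) := fun i => (hNmeas i).union (hNmeas i).neg
  -- the intersection N ∩ -N has measure zero
  have hinter : ∀ i, μ (N i ∩ -N i) = 0 := by
    intro i
    have hsub : N i ∩ -N i ⊆ {0} := by
      rintro w ⟨hw1, hw2⟩
      obtain ⟨c, hc⟩ := hfull
      obtain ⟨r, hr, hball⟩ := Metric.isOpen_iff.mp isOpen_interior c hc
      have hw2' : -w ∈ N i := hw2
      set ε : ℝ := r / (2 * ‖w‖ + 1) with hε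
      have hεpos : 0 < ε := by positivity
      have hmem : c + ε • w ∈ P := by
        apply interior_subset
        apply hball
        have hd : dist (c + ε • w) c = ε * ‖w‖ := by
          rw [dist_eq_norm, add_sub_cancel_left, norm_smul, Real.norm_eq_abs,
            abs_of_pos hεpos]
        rw [Metric.mem_ball, hd, hε]
        rw [div_mul_eq_mul_div, div_lt_iff₀ (by positivity)]
        nlinarith [norm_nonneg w]
      have hcP : c ∈ P := interior_subset hc
      have h1 : (inner ℝ w (c + ε • w - h i) : ℝ) ≤ 0 := hw1 _ hmem
      have h2 : (inner ℝ w (c - h i) : ℝ) ≤ 0 := hw1 _ hcP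
      have h3 : (inner ℝ (-w) (c + ε • w - h i) : ℝ) ≤ 0 := hw2' _ hmem
      have h4 : (inner ℝ (-w) (c - h i) : ℝ) ≤ 0 := hw2' _ hcP
      rw [inner_neg_left] at h3 h4
      have he1 : (inner ℝ w (c + ε • w - h i) : ℝ) = 0 := le_antisymm h1 (by linarith)
      have he2 : (inner ℝ w (c - h i) : ℝ) = 0 := le_antisymm h2 (by linarith)
      have hsplit : c + ε • w - h i = (c - h i) + ε • w := by abel
      rw [hsplit, inner_add_right, he2, zero_add, real_inner_smul_right] at he1
      have hww : (inner ℝ w w : ℝ) = 0 := by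
        rcases mul_eq_zero.mp he1 with hε0 | hww
        · exact absurd hε0 hεpos.ne'
        · exact hww
      have : w = 0 := inner_self_eq_zero.mp hww
      simp [this]
    have h0 : μ ({0} : Set (EuclideanSpace ℝ (Fin p))) = 0 := stdGaussian_singleton hp 0
    exact le_antisymm (h0 ▸ measure_mono hsub) (by simp)
  -- measure of S i
  have hμN : ∀ i, μ (N i) = ENNReal.ofReal (ω i) := by
    intro i
    rw [hω]
    exact (ENNReal.ofReal_toReal (measure_ne_top μ _)).symm
  have hμS : ∀ i, μ (S i) = ENNReal.ofReal (2 * ω i) := by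
    intro i
    have := measure_union_add_inter (μ := μ) (N i) (hNmeas i).neg
    rw [hinter i, add_zero] at this
    rw [hSdef]
    simp only
    rw [this, stdGaussian_neg_set (hNmeas i), hμN i,
      ← ENNReal.ofReal_add (le_of_lt (hωpos i)) (le_of_lt (hωpos i))]
    ring_nf
  have hμSc : ∀ i, μ (S i)ᶜ = ENNReal.ofReal (1 - 2 * ω i) := by
    intro i
    rw [prob_compl_eq_one_sub (hSmeas i), hμS i,
      ENNReal.ofReal_sub _ (by linarith [hωpos i]), ENNReal.ofReal_one]
  -- q and its properties
  set q : ℝ := ⨆ i, 1 - 2 * ω i with hqdef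
  have hle : ∀ i, 1 - 2 * ω i ≤ q := fun i =>
    le_ciSup (f := fun i => 1 - 2 * ω i) (Set.Finite.bddAbove (Set.finite_range _)) i
  obtain ⟨i0, _, hi0⟩ := Finset.exists_max_image Finset.univ (fun i => 1 - 2 * ω i)
    ⟨⟨0, hkpos⟩, Finset.mem_univ _⟩
  have hq1 : q < 1 := by
    have : q ≤ 1 - 2 * ω i0 := ciSup_le fun i => hi0 i (Finset.mem_univ i)
    linarith [hωpos i0]
  have hq0 : 0 < q := lt_of_lt_of_le (by linarith [hωlt i0]) (hle i0)
  set L : ℝ := Real.log (1 / q) with hLdef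
  have hLlog : L = -Real.log q := by rw [hLdef, one_div, Real.log_inv]
  have hL : 0 < L := Real.log_pos ((one_lt_div hq0).mpr hq1)
  have hk' : (0 : ℝ) < k := Nat.cast_pos.mpr hkpos
  -- the key real inequality
  have hm' : Real.log (k / δ) < m * L := by
    have hrw : κbar * k * Real.log (k / δ) = Real.log (k / δ) / L := by
      rw [hκbar]
      field_simp
    rw [hrw] at hm
    exact (div_lt_iff₀ hL).mp hm
  have hkey : (k : ℝ) * q ^ m < δ := by
    have hlog : Real.log ((k : ℝ) * q ^ m) < Real.log δ := by
      rw [Real.log_mul (ne_of_gt hk') (pow_ne_zero _ hq0.ne'), Real.log_pow]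
      rw [Real.log_div (ne_of_gt hk') (ne_of_gt hδ.1)] at hm'
      rw [hLlog] at hm'
      linarith
    exact (Real.log_lt_log_iff (by positivity) hδ.1).mp hlog
  -- event and its complement
  set E : Set (Fin m → EuclideanSpace ℝ (Fin p)) :=
    {g | ∀ i : Fin k, ∃ j : Fin m, g j ∈ S i} with hEdef
  have hEmeas : MeasurableSet E := by
    have : E = ⋂ i, ⋃ j, (fun g : Fin m → EuclideanSpace ℝ (Fin p) => g j) ⁻¹' S i := by
      ext g; simp [hEdef]
    rw [this]
    exact MeasurableSet.iInter fun i => MeasurableSet.iUnion fun j =>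
      measurable_pi_apply j (hSmeas i)
  have hcompl : Eᶜ ⊆ ⋃ i, Set.univ.pi (fun _ : Fin m => (S i)ᶜ) := by
    intro g hg
    simp only [hEdef, Set.mem_compl_iff, Set.mem_setOf_eq, not_forall, not_exists] at hg
    obtain ⟨i, hi⟩ := hg
    exact Set.mem_iUnion.mpr ⟨i, fun j _ => hi j⟩
  -- bound the failure probability
  have hfail : Pm Eᶜ ≤ ENNReal.ofReal δ := by
    calc Pm Eᶜ ≤ Pm (⋃ i, Set.univ.pi (fun _ : Fin m => (S i)ᶜ)) := measure_mono hcompl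
      _ ≤ ∑' i, Pm (Set.univ.pi (fun _ : Fin m => (S i)ᶜ)) := measure_iUnion_le _
      _ = ∑ i, Pm (Set.univ.pi (fun _ : Fin m => (S i)ᶜ)) := tsum_fintype _
      _ ≤ ∑ i : Fin k, ENNReal.ofReal (q ^ m) := by
          apply Finset.sum_le_sum
          intro i _
          rw [hPm, Measure.pi_pi]
          rw [Finset.prod_const, Finset.card_univ, Fintype.card_fin]
          rw [hμSc i, ← ENNReal.ofReal_pow (by linarith [hωlt i])]
          exact ENNReal.ofReal_le_ofReal
            (pow_le_pow_left₀ (by linarith [hωlt i]) (hle i) m)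
      _ = (k : ENNReal) * ENNReal.ofReal (q ^ m) := by
          rw [Finset.sum_const, Finset.card_univ, Fintype.card_fin, nsmul_eq_mul]
      _ = ENNReal.ofReal ((k : ℝ) * q ^ m) := by
          rw [ENNReal.ofReal_mul (by positivity), ENNReal.ofReal_natCast]
      _ ≤ ENNReal.ofReal δ := ENNReal.ofReal_le_ofReal hkey.le
  -- conclude
  have h1 : Pm Eᶜ = 1 - Pm E := prob_compl_eq_one_sub hEmeas
  rw [h1] at hfail
  have h2 : (1 : ENNReal) ≤ ENNReal.ofReal δ + Pm E := tsub_le_iff_right.mp hfail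
  have hne : ENNReal.ofReal δ + Pm E ≠ ⊤ :=
    ENNReal.add_ne_top.mpr ⟨ENNReal.ofReal_ne_top, measure_ne_top _ _⟩
  have h3 := ENNReal.toReal_mono hne h2
  rw [ENNReal.toReal_one, ENNReal.toReal_add ENNReal.ofReal_ne_top (measure_ne_top _ _),
    ENNReal.toReal_ofReal hδ.1.le] at h3
  linarith
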